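/- Let n ≥ 4 and B ≥ 1 be integers, set C_i = C(n−3+i, i), h(γ) = ∑_{i=0}^{B−1} C_i·γ^{B−i}, and g(γ) = (1+γ)·(1 + C_B/h(γ)) for γ > 0. Then g is strictly decreasing on the interval (0, 1], and consequently every γ* ∈ (0, ∞) satisfying g(γ*) ≤ g(γ) for all γ > 0 satisfies γ* > 1; equivalently, the corresponding optimal transmission ratio α* = 1/(1+γ*) satisfies α* < 1/2. -/

import Mathlib

set_option maxHeartbeats 1000000

open Finset

private lemma sq_split (t : ℕ → ℕ → ℝ) (N : ℕ) :
    (∑ j ∈ range N, ∑ l ∈ range N, t j l)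
      = ∑ k ∈ range N, ((∑ j ∈ range (k+1), t j k) + ∑ l ∈ range k, t k l) := by
  induction N with
  | zero => simp
  | succ N ih =>
    calc ∑ j ∈ range (N+1), ∑ l ∈ range (N+1), t j l
        = ∑ j ∈ range (N+1), ((∑ l ∈ range N, t j l) + t j N) :=
          Finset.sum_congr rfl fun j _ => Finset.sum_range_succ _ _
      _ = (∑ j ∈ range (N+1), ∑ l ∈ range N, t j l) + ∑ j ∈ range (N+1), t j N :=
          Finset.sum_add_distrib
      _ = ((∑ j ∈ range N, ∑ l ∈ range N, t j l) + ∑ l ∈ range N, t N l)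
            + ∑ j ∈ range (N+1), t j N := by rw [Finset.sum_range_succ]
      _ = (∑ k ∈ range N, ((∑ j ∈ range (k+1), t j k) + ∑ l ∈ range k, t k l))
            + ((∑ j ∈ range (N+1), t j N) + ∑ l ∈ range N, t N l) := by rw [ih]; ring
      _ = ∑ k ∈ range (N+1), ((∑ j ∈ range (k+1), t j k) + ∑ l ∈ range k, t k l) :=
          (Finset.sum_range_succ _ _).symm

private lemma id1 (B : ℕ) (c : ℕ → ℝ) (x y : ℝ) :
    (∑ j ∈ range B, c (j+1) * y^(j+1)) - (∑ j ∈ range B, c (j+1) * x^(j+1))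
      = (y - x) * ∑ k ∈ range B, c (k+1) * (∑ i ∈ range (k+1), y^i * x^(k-i)) := by
  calc (∑ j ∈ range B, c (j+1) * y^(j+1)) - (∑ j ∈ range B, c (j+1) * x^(j+1))
      = ∑ k ∈ range B, (c (k+1) * y^(k+1) - c (k+1) * x^(k+1)) := by rw [Finset.sum_sub_distrib]
    _ = ∑ k ∈ range B, (y - x) * (c (k+1) * (∑ i ∈ range (k+1), y^i * x^(k-i))) := by
        refine Finset.sum_congr rfl fun k _ => ?_
        have h := geom_sum₂_mul y x (k+1)
        simp only [Nat.add_sub_cancel] at h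
        linear_combination (-(c (k+1))) * h
    _ = (y - x) * ∑ k ∈ range B, c (k+1) * (∑ i ∈ range (k+1), y^i * x^(k-i)) := by
        rw [Finset.mul_sum]

private lemma id2 (B : ℕ) (c : ℕ → ℝ) (x y : ℝ) :
    x * (∑ j ∈ range B, c (j+1) * y^(j+1)) - y * (∑ j ∈ range B, c (j+1) * x^(j+1))
      = (y - x) * (x * y * ∑ k ∈ range B, c (k+1) * (∑ i ∈ range k, y^i * x^(k-1-i))) := by
  calc x * (∑ j ∈ range B, c (j+1) * y^(j+1)) - y * (∑ j ∈ range B, c (j+1) * x^(j+1))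
      = ∑ k ∈ range B, (x * (c (k+1) * y^(k+1)) - y * (c (k+1) * x^(k+1))) := by
        rw [Finset.mul_sum, Finset.mul_sum, ← Finset.sum_sub_distrib]
    _ = ∑ k ∈ range B, (y - x) * (x * y * (c (k+1) * (∑ i ∈ range k, y^i * x^(k-1-i)))) := by
        refine Finset.sum_congr rfl fun k _ => ?_
        have h := geom_sum₂_mul y x k
        linear_combination (-(x * y * c (k+1))) * h
    _ = (y - x) * (x * y * ∑ k ∈ range B, c (k+1) * (∑ i ∈ range k, y^i * x^(k-1-i))) := by
        rw [Finset.mul_sum, Finset.mul_sum]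


private lemma sq_split' (t : ℕ → ℕ → ℝ) (N : ℕ) :
    (∑ j ∈ range N, ∑ l ∈ range N, t j l)
      = ∑ k ∈ range N, ((∑ j ∈ range (k+1), t j k) + ∑ l ∈ range k, t k l) := by
  induction N with
  | zero => simp
  | succ N ih =>
    calc ∑ j ∈ range (N+1), ∑ l ∈ range (N+1), t j l
        = ∑ j ∈ range (N+1), ((∑ l ∈ range N, t j l) + t j N) :=
          Finset.sum_congr rfl fun j _ => Finset.sum_range_succ _ _
      _ = (∑ j ∈ range (N+1), ∑ l ∈ range N, t j l) + ∑ j ∈ range (N+1), t j N :=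
          Finset.sum_add_distrib
      _ = ((∑ j ∈ range N, ∑ l ∈ range N, t j l) + ∑ l ∈ range N, t N l)
            + ∑ j ∈ range (N+1), t j N := by rw [Finset.sum_range_succ]
      _ = (∑ k ∈ range N, ((∑ j ∈ range (k+1), t j k) + ∑ l ∈ range k, t k l))
            + ((∑ j ∈ range (N+1), t j N) + ∑ l ∈ range N, t N l) := by rw [ih]; ring
      _ = ∑ k ∈ range (N+1), ((∑ j ∈ range (k+1), t j k) + ∑ l ∈ range k, t k l) :=
          (Finset.sum_range_succ _ _).symm

private lemma core_lt (B : ℕ) (hB : 1 ≤ B) (c : ℕ → ℝ)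
    (hpos : ∀ k, 0 < c k) (hle : ∀ k, c k ≤ c 0) (hc1 : c 1 < c 0)
    (x y : ℝ) (hx : 0 < x) (hxy : x ≤ y) (hy1 : y ≤ 1) :
    (∑ j ∈ range B, c (j+1) * x^(j+1)) * (∑ l ∈ range B, c (l+1) * y^(l+1))
      < c 0 * ∑ k ∈ range B, c (k+1) *
        ((∑ i ∈ range (k+1), y^i * x^(k-i)) + x*y*(∑ i ∈ range k, y^i * x^(k-1-i))) := by
  have hx1 : x ≤ 1 := hxy.trans hy1
  have hy0 : 0 < y := lt_of_lt_of_le hx hxy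
  have part1 : ∀ k : ℕ, ∑ j ∈ range (k+1), c (j+1)*x^(j+1)*(c (k+1)*y^(k+1))
      ≤ c 0 * (c (k+1) * ∑ i ∈ range (k+1), y^i * x^(k-i)) := by
    intro k
    rw [← Finset.sum_range_reflect (fun i => y^i * x^(k-i)) (k+1)]
    rw [Finset.mul_sum, Finset.mul_sum]
    apply Finset.sum_le_sum
    intro j hj
    have hjk : j ≤ k := by have := Finset.mem_range.mp hj; omega
    have e2 : k + 1 - 1 - j = k - j := by omega
    have e3 : k - (k - j) = j := by omega
    rw [e2, e3]
    have e1 : x^(j+1) ≤ x^j := pow_le_pow_of_le_one hx.le hx1 (Nat.le_succ j)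
    have e4 : y^(k+1) ≤ y^(k-j) := pow_le_pow_of_le_one hy0.le hy1 (by omega)
    calc c (j+1) * x^(j+1) * (c (k+1) * y^(k+1))
        ≤ c 0 * x^j * (c (k+1) * y^(k-j)) := by
          apply mul_le_mul (mul_le_mul (hle _) e1 (pow_nonneg hx.le _) (hpos 0).le)
            (mul_le_mul_of_nonneg_left e4 (hpos _).le)
            (mul_nonneg (hpos _).le (pow_nonneg hy0.le _))
            (mul_nonneg (hpos 0).le (pow_nonneg hx.le _))
      _ = c 0 * (c (k+1) * (y^(k-j) * x^j)) := by ring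
  have part2 : ∀ k : ℕ, ∑ l ∈ range k, c (k+1)*x^(k+1)*(c (l+1)*y^(l+1))
      ≤ c 0 * (c (k+1) * (x*y*∑ i ∈ range k, y^i * x^(k-1-i))) := by
    intro k
    rw [Finset.mul_sum, Finset.mul_sum, Finset.mul_sum]
    apply Finset.sum_le_sum
    intro l hl
    have hlk : l < k := Finset.mem_range.mp hl
    have emon : x*y*(y^l*x^(k-1-l)) = x^(k-l) * y^(l+1) := by
      have h2 : k - 1 - l + 1 = k - l := by omega
      calc x*y*(y^l*x^(k-1-l)) = (x^(k-1-l)*x) * (y^l*y) := by ring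
        _ = x^(k-1-l+1) * y^(l+1) := by rw [← pow_succ, ← pow_succ]
        _ = x^(k-l) * y^(l+1) := by rw [h2]
    rw [emon]
    have e1 : x^(k+1) ≤ x^(k-l) := pow_le_pow_of_le_one hx.le hx1 (by omega)
    calc c (k+1)*x^(k+1)*(c (l+1)*y^(l+1))
        = c (l+1) * x^(k+1) * (c (k+1) * y^(l+1)) := by ring
      _ ≤ c 0 * x^(k-l) * (c (k+1) * y^(l+1)) :=
          mul_le_mul (mul_le_mul (hle _) e1 (pow_nonneg hx.le _) (hpos 0).le) le_rfl
            (mul_nonneg (hpos _).le (pow_nonneg hy0.le _))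
            (mul_nonneg (hpos 0).le (pow_nonneg hx.le _))
      _ = c 0 * (c (k+1) * (x^(k-l)*y^(l+1))) := by ring
  rw [Finset.sum_mul_sum, Finset.mul_sum,
    sq_split' (fun j l => c (j+1) * x^(j+1) * (c (l+1) * y^(l+1))) B]
  refine Finset.sum_lt_sum (fun k _ => ?_) ⟨0, Finset.mem_range.mpr hB, ?_⟩
  · calc (∑ j ∈ range (k+1), c (j+1)*x^(j+1)*(c (k+1)*y^(k+1)))
          + ∑ l ∈ range k, c (k+1)*x^(k+1)*(c (l+1)*y^(l+1))
        ≤ c 0 * (c (k+1) * ∑ i ∈ range (k+1), y^i * x^(k-i))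
          + c 0 * (c (k+1) * (x*y*∑ i ∈ range k, y^i * x^(k-1-i))) :=
          add_le_add (part1 k) (part2 k)
      _ = c 0 * (c (k+1) *
            ((∑ i ∈ range (k+1), y^i * x^(k-i)) + x*y*(∑ i ∈ range k, y^i * x^(k-1-i)))) := by
          ring
  · simp only [Finset.sum_range_one, Finset.sum_range_zero, pow_one, pow_zero, mul_one,
      mul_zero, add_zero, zero_add, Nat.zero_sub]
    have hxy1 : x * y ≤ 1 := mul_le_one₀ hx1 hy0.le hy1
    nlinarith [mul_le_mul_of_nonneg_left hxy1 (mul_pos (hpos 1) (hpos 1)).le,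
      mul_lt_mul_of_pos_right hc1 (hpos 1)]


/-- Corollary 4: g is strictly decreasing on (0,1], so the optimal γ* exceeds 1
and the optimal transmission ratio α* = 1/(1+γ*) is below 1/2. -/
theorem stmt14 (n B : ℕ) (hn : 4 ≤ n) (hB : 1 ≤ B)
    (h g : ℝ → ℝ)
    (hh : ∀ γ : ℝ, h γ = ∑ i ∈ Finset.range B, ((n - 3 + i).choose i : ℝ) * γ ^ (B - i))
    (hg : ∀ γ : ℝ, 0 < γ →
      g γ = (1 + γ) * (1 + ((n - 3 + B).choose B : ℝ) / h γ)) :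
    StrictAntiOn g (Set.Ioc 0 1) ∧
    ∀ γs : ℝ, 0 < γs → (∀ γ : ℝ, 0 < γ → g γs ≤ g γ) →
      1 < γs ∧ 1 / (1 + γs) < 1 / 2 := by
  set c : ℕ → ℝ := fun k => ((n - 3 + (B - k)).choose (B - k) : ℝ) with hc
  have hc0 : c 0 = ((n - 3 + B).choose B : ℝ) := by simp [hc]
  have hrep : ∀ γ : ℝ, h γ = ∑ j ∈ range B, c (j+1) * γ^(j+1) := by
    intro γ
    rw [hh γ, ← Finset.sum_range_reflect (fun i => ((n - 3 + i).choose i : ℝ) * γ ^ (B - i)) B]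
    refine Finset.sum_congr rfl fun j hj => ?_
    have hj' : j < B := Finset.mem_range.mp hj
    have e2 : B - (B - 1 - j) = j + 1 := by omega
    have e3 : B - (j + 1) = B - 1 - j := by omega
    simp only [hc, e3, e2]
  have hpos : ∀ k, 0 < c k := by
    intro k
    have := Nat.choose_pos (Nat.le_add_left (B - k) (n - 3))
    simp only [hc]
    exact_mod_cast this
  have hle : ∀ k, c k ≤ c 0 := by
    intro k
    simp only [hc, Nat.sub_zero]
    have symm1 : (n - 3 + (B - k)).choose (B - k) = (n - 3 + (B - k)).choose (n - 3) := by
      rw [← Nat.choose_symm (Nat.le_add_right (n-3) (B-k))]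
      congr 1
      omega
    have symm2 : (n - 3 + B).choose B = (n - 3 + B).choose (n - 3) := by
      rw [← Nat.choose_symm (Nat.le_add_right (n-3) B)]
      congr 1
      omega
    rw [symm1, symm2]
    exact_mod_cast Nat.choose_le_choose (n - 3) (by omega)
  have hc1 : c 1 < c 0 := by
    simp only [hc, Nat.sub_zero]
    have e : n - 3 + B = (n - 3 + (B - 1)) + 1 := by omega
    have e2 : B = (B - 1) + 1 := by omega
    rw [e, e2]
    rw [Nat.choose_succ_succ]
    have hpos2 : 0 < (n - 3 + (B - 1)).choose ((B - 1) + 1) := Nat.choose_pos (by omega)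
    exact_mod_cast Nat.lt_add_of_pos_right hpos2
  have hposh : ∀ z : ℝ, 0 < z → 0 < h z := by
    intro z hz
    rw [hrep z]
    exact Finset.sum_pos (fun k _ => mul_pos (hpos _) (pow_pos hz _)) ⟨0, Finset.mem_range.mpr hB⟩
  have key : ∀ x y : ℝ, 0 < x → x ≤ y → y ≤ 1 →
      h x * h y < c 0 * ∑ k ∈ range B, c (k+1) *
        ((∑ i ∈ range (k+1), y^i * x^(k-i)) + x*y*(∑ i ∈ range k, y^i * x^(k-1-i))) := by
    intro x y hx hxy hy
    rw [hrep x, hrep y]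
    exact core_lt B hB c hpos hle hc1 x y hx hxy hy
  have hSsum : ∀ x y : ℝ, (∑ k ∈ range B, c (k+1) *
        ((∑ i ∈ range (k+1), y^i * x^(k-i)) + x*y*(∑ i ∈ range k, y^i * x^(k-1-i))))
      = (∑ k ∈ range B, c (k+1) * (∑ i ∈ range (k+1), y^i * x^(k-i)))
        + x*y*(∑ k ∈ range B, c (k+1) * (∑ i ∈ range k, y^i * x^(k-1-i))) := by
    intro x y
    rw [Finset.mul_sum, ← Finset.sum_add_distrib]
    exact Finset.sum_congr rfl fun k _ => by ring
  have key2 : ∀ x y : ℝ, 0 < x → x < y → y ≤ 1 →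
      (y - x) * (h x * h y) < c 0 * ((1+x) * h y - (1+y) * h x) := by
    intro x y hx hxy hy
    have hSid : (1+x) * h y - (1+y) * h x
        = (y - x) * ((∑ k ∈ range B, c (k+1) * (∑ i ∈ range (k+1), y^i * x^(k-i)))
            + x*y*(∑ k ∈ range B, c (k+1) * (∑ i ∈ range k, y^i * x^(k-1-i)))) := by
      have i1 := id1 B c x y
      have i2 := id2 B c x y
      rw [hrep x, hrep y]
      linear_combination i1 + i2
    have k1 := key x y hx hxy.le hy
    rw [hSsum x y] at k1
    have hyx : 0 < y - x := sub_pos.mpr hxy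
    calc (y - x) * (h x * h y)
        < (y - x) * (c 0 * ((∑ k ∈ range B, c (k+1) * (∑ i ∈ range (k+1), y^i * x^(k-i)))
            + x*y*(∑ k ∈ range B, c (k+1) * (∑ i ∈ range k, y^i * x^(k-1-i))))) :=
          mul_lt_mul_of_pos_left k1 hyx
      _ = c 0 * ((1+x) * h y - (1+y) * h x) := by rw [hSid]; ring
  have expand : ∀ z : ℝ, 0 < h z → (1+z) * (1 + c 0 / h z) = ((1+z) * (h z + c 0)) / h z := by
    intro z hz
    field_simp
  have hanti : StrictAntiOn g (Set.Ioc (0:ℝ) 1) := by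
    intro x hx y hy hxy
    have hx0 : 0 < x := hx.1
    have hy0 : 0 < y := hy.1
    have hhx := hposh x hx0
    have hhy := hposh y hy0
    rw [hg x hx0, hg y hy0, ← hc0]
    rw [expand x hhx, expand y hhy, div_lt_div_iff₀ hhy hhx]
    have k2 := key2 x y hx0 hxy hy.2
    nlinarith [k2]
  set H' : ℝ := ∑ k ∈ range B, ((k:ℝ)+1) * c (k+1) with hH'
  have hH'pos : 0 < H' := by
    rw [hH']
    exact Finset.sum_pos (fun k _ => mul_pos (by positivity) (hpos _)) ⟨0, Finset.mem_range.mpr hB⟩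
  have hh1 : 0 < h 1 := hposh 1 one_pos
  have h1eq : h 1 = ∑ k ∈ range B, c (k+1) := by
    rw [hrep 1]
    exact Finset.sum_congr rfl fun k _ => by rw [one_pow, mul_one]
  have P1 : h 1 * h 1 < c 0 * (2*H' - h 1) := by
    have k1 := key 1 1 one_pos le_rfl le_rfl
    have e : (∑ k ∈ range B, c (k+1) *
          ((∑ i ∈ range (k+1), (1:ℝ)^i * (1:ℝ)^(k-i)) + 1*1*(∑ i ∈ range k, (1:ℝ)^i * (1:ℝ)^(k-1-i))))
        = 2*H' - h 1 := by
      rw [h1eq, hH', Finset.mul_sum, ← Finset.sum_sub_distrib]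
      refine Finset.sum_congr rfl fun k _ => ?_
      have s1 : (∑ i ∈ range (k+1), (1:ℝ)^i * (1:ℝ)^(k-i)) = ((k:ℝ)+1) := by
        simp
      have s2 : (∑ i ∈ range k, (1:ℝ)^i * (1:ℝ)^(k-1-i)) = (k:ℝ) := by
        simp
      rw [s1, s2]
      ring
    rw [e] at k1
    exact k1
  refine ⟨hanti, ?_⟩
  intro γs hγs hmin
  have h1lt : 1 < γs := by
    rcases lt_trichotomy γs 1 with hlt | heq | hgt
    · exfalso
      have hgg := hanti ⟨hγs, hlt.le⟩ ⟨one_pos, le_rfl⟩ hlt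
      have h2 := hmin 1 one_pos
      linarith
    · exfalso
      set ρ : ℝ := c 0 * (2*H' - h 1) / (h 1 * h 1) with hρdef
      have hρ : 1 < ρ := by
        rw [hρdef, lt_div_iff₀ (mul_pos hh1 hh1)]
        linarith [P1]
      have hρ0 : (0:ℝ) < ρ := by linarith
      set yv : ℝ := ρ ^ (((B:ℝ)+1)⁻¹) with hyv
      have hyv1 : 1 < yv := by
        rw [hyv]
        exact (Real.one_lt_rpow_iff_of_pos hρ0).mpr (Or.inl ⟨hρ, by positivity⟩)
      have hyv0 : (0:ℝ) < yv := by linarith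
      have hyB : yv ^ B < ρ := by
        have e : yv ^ B = ρ ^ ((B:ℝ) * ((B:ℝ)+1)⁻¹) := by
          rw [hyv, ← Real.rpow_natCast (ρ ^ (((B:ℝ)+1)⁻¹)) B, ← Real.rpow_mul hρ0.le]
          ring_nf
        rw [e]
        calc ρ ^ ((B:ℝ) * ((B:ℝ)+1)⁻¹) < ρ ^ (1:ℝ) := by
              apply Real.rpow_lt_rpow_of_exponent_lt hρ
              rw [← div_eq_mul_inv]
              exact (div_lt_one (by positivity)).mpr (by linarith)
          _ = ρ := Real.rpow_one ρ
      have hlow : (yv - 1) * H' ≤ h yv - h 1 := by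
        rw [hrep yv, h1eq, ← Finset.sum_sub_distrib, hH', Finset.mul_sum]
        apply Finset.sum_le_sum
        intro k _
        have hb := one_add_mul_le_pow (a := yv - 1) (by linarith) (k+1)
        have hb2 : 1 + ((k:ℝ)+1)*(yv - 1) ≤ yv^(k+1) := by
          have e : (1 : ℝ) + (yv - 1) = yv := by ring
          rw [e] at hb
          push_cast at hb
          linarith [hb]
        nlinarith [mul_le_mul_of_nonneg_left hb2 (hpos (k+1)).le]
      have hup : h yv ≤ yv^B * h 1 := by
        rw [hrep yv, h1eq, Finset.mul_sum]
        apply Finset.sum_le_sum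
        intro k hk
        have e : yv^(k+1) ≤ yv^B := pow_le_pow_right₀ hyv1.le (Finset.mem_range.mp hk)
        nlinarith [mul_le_mul_of_nonneg_left e (hpos (k+1)).le]
      have hslack : yv^B * (h 1 * h 1) < c 0 * (2*H' - h 1) := by
        have hyB2 := hyB
        rw [hρdef, lt_div_iff₀ (mul_pos hh1 hh1)] at hyB2
        exact hyB2
      have hF : 0 < c 0 * (2 * h yv - (1+yv) * h 1) - (yv - 1) * (h 1 * h yv) := by
        have h2' : (yv-1)*(2*H' - h 1) ≤ 2*h yv - (1+yv)*h 1 := by nlinarith [hlow]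
        have h3' : c 0 * ((yv-1)*(2*H' - h 1)) ≤ c 0 * (2*h yv - (1+yv)*h 1) :=
          mul_le_mul_of_nonneg_left h2' (hpos 0).le
        have h1' : (yv - 1) * (h 1 * h yv) ≤ (yv - 1) * (h 1 * (yv^B * h 1)) :=
          mul_le_mul_of_nonneg_left (mul_le_mul_of_nonneg_left hup hh1.le) (by linarith)
        have h4' := mul_pos (by linarith : (0:ℝ) < yv - 1) (sub_pos.mpr hslack)
        nlinarith [h3', h1', h4']
      have hgy : g yv < g 1 := by
        have hhyv := hposh yv hyv0
        rw [hg yv hyv0, hg 1 one_pos, ← hc0, expand yv hhyv, expand 1 hh1,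
          div_lt_div_iff₀ hhyv hh1]
        nlinarith [hF]
      have hmy := hmin yv hyv0
      rw [heq] at hmy
      linarith
    · exact hgt
  refine ⟨h1lt, ?_⟩
  have h2lt : (2:ℝ) < 1 + γs := by linarith
  exact one_div_lt_one_div_of_lt two_pos h2lt
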